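/- Let f : ℂ → ℂ be continuous with Σ_{k∈ℤ²} sup_{z ∈ k+[0,1]²} |f(z)| < ∞, and let (m,n) ∈ ℤ². Then for all z = x + iy and w = r + is in ℂ: Z^t(T^t_{(m,n)} f)(z, w) = e^{2πi(nx − my)} e^{2πi(nr − ms)} Z^t f(z, w). -/

import Mathlib

open MeasureTheory Complex
open scoped ENNReal NNReal
noncomputable section

/-- ∂/∂x -/
def pdx (f : ℂ → ℂ) (z : ℂ) : ℂ := fderiv ℝ f z 1
/-- ∂/∂y -/
def pdy (f : ℂ → ℂ) (z : ℂ) : ℂ := fderiv ℝ f z Complex.I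
/-- ∂/∂z := ∂/∂x − i ∂/∂y -/
def pdz (f : ℂ → ℂ) (z : ℂ) : ℂ := pdx f z - Complex.I * pdy f z
/-- ∂/∂z̄ := ∂/∂x + i ∂/∂y -/
def pdzbar (f : ℂ → ℂ) (z : ℂ) : ℂ := pdx f z + Complex.I * pdy f z
/-- Zf(z) = ∂f/∂z + (1/2) z̄ f(z) -/
def Zop (f : ℂ → ℂ) (z : ℂ) : ℂ := pdz f z + (1/2 : ℂ) * (starRingEnd ℂ) z * f z
/-- Z̄f(z) = ∂f/∂z̄ − (1/2) z f(z) -/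
def Zbarop (f : ℂ → ℂ) (z : ℂ) : ℂ := pdzbar f z - (1/2 : ℂ) * z * f z

/-- normalized Hermite functions -/
def hermiteFn (k : ℕ) (x : ℝ) : ℝ :=
  ((2:ℝ)^k * Real.sqrt Real.pi * (Nat.factorial k : ℝ)) ^ (-(1/2 : ℝ)) * (-1:ℝ)^k *
    Real.exp (x^2/2) * iteratedDeriv k (fun t => Real.exp (-t^2)) x

/-- special Hermite functions φ_{m,n} -/
def sphi (m n : ℕ) (z : ℂ) : ℂ :=
  (((2 * Real.pi) ^ (-(1/2:ℝ)) : ℝ) : ℂ) *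
    ∫ ξ : ℝ, Complex.exp (Complex.I * ξ * z.re) *
      (hermiteFn m (ξ + z.im/2) : ℂ) * (hermiteFn n (ξ - z.im/2) : ℂ)

/-- special Hermite operator L -/
def Lop (f : ℂ → ℂ) (z : ℂ) : ℂ :=
  -(pdx (pdx f) z + pdy (pdy f) z) + (1/4 : ℂ) * ((‖z‖^2 : ℝ) : ℂ) * f z
    - Complex.I * ((z.re : ℂ) * pdy f z - (z.im : ℂ) * pdx f z)

/-- Gaussian integer associated to k ∈ ℤ² -/
def gint (k : ℤ × ℤ) : ℂ := (k.1 : ℂ) + (k.2 : ℂ) * Complex.I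

/-- twisted translation -/
def Tt (m n : ℤ) (f : ℂ → ℂ) (z : ℂ) : ℂ :=
  Complex.exp (2 * Real.pi * Complex.I * ((n : ℂ) * z.re - (m : ℂ) * z.im)) *
    f (z - ((m : ℂ) + (n : ℂ) * Complex.I))

/-- twisted Zak transform -/
def Zak (f : ℂ → ℂ) (z w : ℂ) : ℂ :=
  ∑' k : ℤ × ℤ, f (z - gint k) *
    Complex.exp (2 * Real.pi * Complex.I * (((w * (starRingEnd ℂ) (gint k)).im : ℝ) : ℂ))

/-- the cell k + [0,1]² -/
def cell (k : ℤ × ℤ) : Set ℂ :=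
  {z : ℂ | z.re ∈ Set.Icc (k.1 : ℝ) (k.1 + 1) ∧ z.im ∈ Set.Icc (k.2 : ℝ) (k.2 + 1)}

/-- amalgam local sup norm -/
def amalgamNorm (f : ℂ → ℂ) (k : ℤ × ℤ) : ℝ := sSup ((fun z => ‖f z‖) '' cell k)

/-- unit square Q = [0,1) × [0,1) -/
def Qset : Set ℂ := {z : ℂ | z.re ∈ Set.Ico (0:ℝ) 1 ∧ z.im ∈ Set.Ico (0:ℝ) 1}

/-- frame condition with bounds A, B on a sub-collection S of twisted translates of g -/
def IsTwistedFrameOn (g : ℂ → ℂ) (S : Set (ℤ × ℤ)) (A B : ℝ) : Prop :=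
  ∀ f : ℂ → ℂ, MemLp f 2 (volume : Measure ℂ) →
    A * ∫ z : ℂ, ‖f z‖^2 ≤
        (∑' k : S, ‖∫ z : ℂ, f z * (starRingEnd ℂ) (Tt (k : ℤ × ℤ).1 (k : ℤ × ℤ).2 g z)‖^2) ∧
    (∑' k : S, ‖∫ z : ℂ, f z * (starRingEnd ℂ) (Tt (k : ℤ × ℤ).1 (k : ℤ × ℤ).2 g z)‖^2) ≤
        B * ∫ z : ℂ, ‖f z‖^2

/-- the twisted Gabor system of g is a frame for L²(ℂ) -/
def IsTwistedFrame (g : ℂ → ℂ) : Prop :=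
  ∃ A B : ℝ, 0 < A ∧ 0 < B ∧ IsTwistedFrameOn g Set.univ A B

/-- exact frame: a frame that ceases to be a frame upon deletion of any single element -/
def IsExactTwistedFrame (g : ℂ → ℂ) : Prop :=
  IsTwistedFrame g ∧
    ∀ k₀ : ℤ × ℤ, ¬ ∃ A B : ℝ, 0 < A ∧ 0 < B ∧ IsTwistedFrameOn g ({k₀}ᶜ) A B


lemma exp_key (F a b c d e : ℂ) (j : ℤ)
    (h : a + b = c + d + e + (j : ℂ) * (2 * Real.pi * Complex.I)) :
    Complex.exp a * Complex.exp b * F =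
      Complex.exp c * Complex.exp d * (F * Complex.exp e) := by
  rw [← Complex.exp_add, h, Complex.exp_add, Complex.exp_add, Complex.exp_add,
    Complex.exp_int_mul_two_pi_mul_I, mul_one]
  ring

-- STATEMENT 7
theorem stmt7 (f : ℂ → ℂ) (hf : Continuous f) (hsum : Summable (amalgamNorm f))
    (m n : ℤ) (z w : ℂ) :
    Zak (Tt m n f) z w =
      Complex.exp (2 * Real.pi * Complex.I * ((n : ℂ) * z.re - (m : ℂ) * z.im)) *
      Complex.exp (2 * Real.pi * Complex.I * ((n : ℂ) * w.re - (m : ℂ) * w.im)) *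
      Zak f z w := by
  unfold Zak
  rw [← (Equiv.subRight ((m, n) : ℤ × ℤ)).tsum_eq, mul_assoc, ← tsum_mul_left]
  apply tsum_congr
  intro k
  simp only [Equiv.subRight_apply]
  unfold Tt gint
  have h1 : z - ((((k - (m, n)).1 : ℤ) : ℂ) + ((k - (m, n)).2 : ℤ) * Complex.I)
      - ((m : ℂ) + (n : ℂ) * Complex.I) = z - (((k.1 : ℤ) : ℂ) + ((k.2 : ℤ) : ℂ) * Complex.I) := by
    simp only [Prod.fst_sub, Prod.snd_sub]
    push_cast
    ring
  rw [h1, mul_right_comm]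
  exact exp_key _ _ _ _ _ _ (m * k.2 - n * k.1) (by
    simp only [Prod.fst_sub, Prod.snd_sub, Complex.sub_re, Complex.sub_im, Complex.add_re,
      Complex.add_im, Complex.mul_re, Complex.mul_im, Complex.conj_re, Complex.conj_im,
      Complex.I_re, Complex.I_im, Complex.intCast_re, Complex.intCast_im, Complex.ofReal_sub,
      Complex.ofReal_add, Complex.ofReal_mul, Complex.ofReal_neg]
    push_cast
    ring)
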